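/- arXiv:1708.01567 — 2 statements merged into one kernel-verified Lean document; each statement's English description precedes it below -/
import Mathlib

section
/- For every measurable u : ℝ^n_+ → ℝ with u ∈ L^{2*_s}(ℝ^n_+) and E_s(u;ℝ^n_+×ℝ^n_+) < ∞ one has E_s(u;ℝ^n_+×ℝ^n_+) ≥ (1/4)·S_s·‖u‖²_{L^{2*_s}(ℝ^n_+)}. In particular the restricted space D^s_R(ℝ^n_+) is continuously embedded into L^{2*_s}(ℝ^n_+). -/
open MeasureTheory Set Filter Topology
open scoped ENNReal

noncomputable section

/-- Euclidean space `ℝ^n`. -/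
abbrev Rn (n : ℕ) : Type := EuclideanSpace ℝ (Fin n)

/-- The half-space `ℝ^n_+` of points with positive first coordinate. -/
def Hplus (n : ℕ) [NeZero n] : Set (Rn n) := {x : Rn n | 0 < x 0}

/-- The half-space `ℝ^n_-` of points with negative first coordinate. -/
def Hminus (n : ℕ) [NeZero n] : Set (Rn n) := {x : Rn n | x 0 < 0}

/-- The normalization constant `C_{n,s} = s·2^{2s}·Γ(n/2+s)/(π^{n/2}·Γ(1−s))`. -/
def Cns (n : ℕ) (s : ℝ) : ℝ :=
  s * (2 : ℝ) ^ (2 * s) * Real.Gamma ((n : ℝ) / 2 + s) /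
    (Real.pi ^ ((n : ℝ) / 2) * Real.Gamma (1 - s))

/-- The quadratic form `E_s(u; Z) = (C_{n,s}/2)·∬_Z (u(x)−u(y))²/|x−y|^{n+2s} dx dy`,
valued in `ℝ≥0∞` (the integrand is nonnegative). -/
def Es (n : ℕ) (s : ℝ) (u : Rn n → ℝ) (Z : Set (Rn n × Rn n)) : ℝ≥0∞ :=
  ENNReal.ofReal (Cns n s / 2) *
    ∫⁻ p in Z, ENNReal.ofReal ((u p.1 - u p.2) ^ 2 / ‖p.1 - p.2‖ ^ ((n : ℝ) + 2 * s))

/-- The critical exponent `2*_s = 2n/(n−2s)` as an extended real. -/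
def pStar (n : ℕ) (s : ℝ) : ℝ≥0∞ := ENNReal.ofReal (2 * n / (n - 2 * s))

/-- The constant `γ_s = 2^{2s−1}·Γ(s+1/2)/(√π·Γ(1−s))`. -/
def gammaS (s : ℝ) : ℝ :=
  (2 : ℝ) ^ (2 * s - 1) * Real.Gamma (s + 1 / 2) / (Real.sqrt Real.pi * Real.Gamma (1 - s))

/-- The semirestricted domain `Z = (ℝ^n×ℝ^n) ∖ (ℝ^n_-×ℝ^n_-)`. -/
def Zsr (n : ℕ) [NeZero n] : Set (Rn n × Rn n) := Set.univ \ ((Hminus n) ×ˢ (Hminus n))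

/-- The fractional Sobolev constant `S_s`: the infimum of
`E_s(u;ℝ^n×ℝ^n)/‖u‖²_{L^{2*_s}(ℝ^n)}` over admissible `u`. -/
def Ss (n : ℕ) (s : ℝ) : ℝ≥0∞ :=
  sInf { r : ℝ≥0∞ | ∃ u : Rn n → ℝ, Measurable u ∧
    eLpNorm u (pStar n s) volume < ⊤ ∧
    Es n s u Set.univ < ⊤ ∧
    ¬ (u =ᵐ[volume] 0) ∧
    r = Es n s u Set.univ / (eLpNorm u (pStar n s) volume) ^ 2 }

/-- The restricted Neumann Sobolev constant `S^R_s(ℝ^n_+)`. -/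
def SR (n : ℕ) [NeZero n] (s : ℝ) : ℝ≥0∞ :=
  sInf { r : ℝ≥0∞ | ∃ u : Rn n → ℝ, Measurable u ∧
    eLpNorm u (pStar n s) (volume.restrict (Hplus n)) < ⊤ ∧
    Es n s u ((Hplus n) ×ˢ (Hplus n)) < ⊤ ∧
    ¬ (u =ᵐ[volume.restrict (Hplus n)] 0) ∧
    r = Es n s u ((Hplus n) ×ˢ (Hplus n)) /
        (eLpNorm u (pStar n s) (volume.restrict (Hplus n))) ^ 2 }

/-- The semirestricted Neumann Sobolev constant `S^Sr_s(ℝ^n_+)`. -/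
def SSr (n : ℕ) [NeZero n] (s : ℝ) : ℝ≥0∞ :=
  sInf { r : ℝ≥0∞ | ∃ u : Rn n → ℝ, Measurable u ∧
    eLpNorm u (pStar n s) (volume.restrict (Hplus n)) < ⊤ ∧
    Es n s u (Zsr n) < ⊤ ∧
    ¬ (u =ᵐ[volume.restrict (Hplus n)] 0) ∧
    r = Es n s u (Zsr n) /
        (eLpNorm u (pStar n s) (volume.restrict (Hplus n))) ^ 2 }

/-! ### Auxiliary material: reflection across the hyperplane `x 0 = 0`. -/

/-- Reflection of `ℝ^n` across the hyperplane `{x | x 0 = 0}`, as a linear isometry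
equivalence. -/
def R0 (n : ℕ) [NeZero n] : Rn n ≃ₗᵢ[ℝ] Rn n :=
  LinearIsometryEquiv.piLpCongrRight 2
    (fun i => if i = (0 : Fin n) then LinearIsometryEquiv.neg ℝ else
      LinearIsometryEquiv.refl ℝ ℝ)

lemma R0_apply_zero {n : ℕ} [NeZero n] (x : Rn n) : R0 n x 0 = -(x 0) := by
  simp [R0, LinearIsometryEquiv.piLpCongrRight_apply]

lemma R0_apply_ne {n : ℕ} [NeZero n] {i : Fin n} (hi : i ≠ 0) (x : Rn n) :
    R0 n x i = x i := by
  simp [R0, LinearIsometryEquiv.piLpCongrRight_apply, hi]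

lemma R0_invol {n : ℕ} [NeZero n] (x : Rn n) : R0 n (R0 n x) = x := by
  ext i
  by_cases hi : i = 0
  · subst hi; rw [R0_apply_zero, R0_apply_zero, neg_neg]
  · rw [R0_apply_ne hi, R0_apply_ne hi]

lemma norm_sub_le_reflect {n : ℕ} [NeZero n] {x y : Rn n}
    (hx : 0 < x 0) (hy : 0 < y 0) : ‖x - y‖ ≤ ‖x - R0 n y‖ := by
  rw [EuclideanSpace.norm_eq, EuclideanSpace.norm_eq]
  apply Real.sqrt_le_sqrt
  apply Finset.sum_le_sum
  intro i _
  by_cases hi : i = 0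
  · subst hi
    have h1 : (x - y) 0 = x 0 - y 0 := rfl
    have h2 : (x - R0 n y) 0 = x 0 - R0 n y 0 := rfl
    rw [h1, h2, R0_apply_zero, Real.norm_eq_abs, Real.norm_eq_abs, sq_abs, sq_abs]
    nlinarith
  · have h1 : (x - y) i = x i - y i := rfl
    have h2 : (x - R0 n y) i = x i - R0 n y i := rfl
    rw [h1, h2, R0_apply_ne hi]

lemma hyperplane_null {n : ℕ} [NeZero n] :
    (volume : Measure (Rn n)) {x : Rn n | x 0 = 0} = 0 := by
  have h : {x : Rn n | x 0 = 0} =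
      (LinearMap.ker (EuclideanSpace.projₗ (𝕜 := ℝ) (0 : Fin n)) : Set (Rn n)) := by
    ext x
    simp [LinearMap.mem_ker, EuclideanSpace.projₗ]
  rw [h]
  apply Measure.addHaar_submodule
  intro htop
  have h1 : (EuclideanSpace.single (0 : Fin n) (1 : ℝ)) ∈
      LinearMap.ker (EuclideanSpace.projₗ (𝕜 := ℝ) (0 : Fin n)) := by
    rw [htop]; trivial
  rw [LinearMap.mem_ker] at h1
  simp [EuclideanSpace.projₗ] at h1

/-- For every measurable `u` on `ℝ^n_+` with `u ∈ L^{2*_s}(ℝ^n_+)` and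
`E_s(u;ℝ^n_+×ℝ^n_+) < ∞` one has `E_s(u;ℝ^n_+×ℝ^n_+) ≥ (1/4)·S_s·‖u‖²_{L^{2*_s}(ℝ^n_+)}`;
in particular `D^s_R(ℝ^n_+)` embeds continuously into `L^{2*_s}(ℝ^n_+)`. -/
theorem restricted_embedding (n : ℕ) [NeZero n] (s : ℝ)
    (hs : s ∈ Set.Ioo (0 : ℝ) 1) (hns : 2 * s < n)
    (u : Rn n → ℝ) (hu : Measurable u)
    (hLp : eLpNorm u (pStar n s) (volume.restrict (Hplus n)) < ⊤)
    (hE : Es n s u ((Hplus n) ×ˢ (Hplus n)) < ⊤) :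
    (1 / 4 : ℝ≥0∞) * Ss n s * (eLpNorm u (pStar n s) (volume.restrict (Hplus n))) ^ 2 ≤
      Es n s u ((Hplus n) ×ˢ (Hplus n)) := by
  obtain ⟨hs0, hs1⟩ := hs
  have hn0 : (0 : ℝ) < n := by nlinarith
  have hp0 : pStar n s ≠ 0 := by
    simp only [pStar, ne_eq, ENNReal.ofReal_eq_zero, not_le]
    apply div_pos (by linarith) (by linarith)
  have hpt : pStar n s ≠ ⊤ := ENNReal.ofReal_ne_top
  -- basic measurability
  have meas0 : Measurable fun x : Rn n => x 0 :=
    (EuclideanSpace.proj (𝕜 := ℝ) (0 : Fin n)).continuous.measurable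
  have hA : MeasurableSet (Hplus n) := meas0 measurableSet_Ioi
  have hB : MeasurableSet (Hminus n) := meas0 measurableSet_Iio
  -- the boundary is null
  have hSc : (volume : Measure (Rn n)) (Hplus n ∪ Hminus n)ᶜ = 0 := by
    apply measure_mono_null _ hyperplane_null
    intro x hx
    simp only [Set.mem_compl_iff, Set.mem_union, Hplus, Hminus, Set.mem_setOf_eq,
      not_or, not_lt] at hx
    exact le_antisymm hx.1 hx.2
  have hS : (volume : Measure (Rn n)).restrict (Hplus n ∪ Hminus n) = volume := by
    rw [Measure.restrict_congr_set (ae_eq_univ.mpr hSc), Measure.restrict_univ]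
  -- the reflected extension
  set v : Rn n → ℝ := fun x => if 0 < x 0 then u x else u (R0 n x) with hvdef
  have hv : Measurable v :=
    Measurable.ite (meas0 measurableSet_Ioi) hu (hu.comp (R0 n).continuous.measurable)
  have vA : ∀ x ∈ Hplus n, v x = u x := fun x hx => if_pos hx
  have vB : ∀ x ∈ Hminus n, v x = u (R0 n x) := fun x hx => if_neg (not_lt.mpr hx.le)
  have BpreA : Hminus n = (R0 n) ⁻¹' (Hplus n) := by
    ext x
    simp [Hplus, Hminus, Set.mem_preimage, R0_apply_zero]
  have mpR : MeasurePreserving (R0 n) volume volume := (R0 n).measurePreserving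
  have embR : MeasurableEmbedding (R0 n) :=
    ((R0 n).toHomeomorph.toMeasurableEquiv).measurableEmbedding
  -- Lp bound for v
  have hIu : (∫⁻ x in Hplus n, (‖u x‖₊ : ℝ≥0∞) ^ (pStar n s).toReal ∂volume) < ⊤ :=
    (eLpNorm_lt_top_iff_lintegral_rpow_enorm_lt_top hp0 hpt).mp hLp
  have hIvA : (∫⁻ x in Hplus n, (‖v x‖₊ : ℝ≥0∞) ^ (pStar n s).toReal ∂volume)
      = ∫⁻ x in Hplus n, (‖u x‖₊ : ℝ≥0∞) ^ (pStar n s).toReal ∂volume := by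
    apply setLIntegral_congr_fun hA
    exact fun x hx => by rw [vA x hx]
  have hIvB : (∫⁻ x in Hminus n, (‖v x‖₊ : ℝ≥0∞) ^ (pStar n s).toReal ∂volume)
      = ∫⁻ x in Hplus n, (‖u x‖₊ : ℝ≥0∞) ^ (pStar n s).toReal ∂volume := by
    rw [setLIntegral_congr_fun hB
      (fun x hx => by simp only [vB x hx] :
        EqOn (fun x => (‖v x‖₊ : ℝ≥0∞) ^ (pStar n s).toReal)
          (fun x => (‖u (R0 n x)‖₊ : ℝ≥0∞) ^ (pStar n s).toReal) (Hminus n)), BpreA]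
    exact mpR.setLIntegral_comp_preimage_emb embR
      (fun x => (‖u x‖₊ : ℝ≥0∞) ^ (pStar n s).toReal) (Hplus n)
  have hvLp : eLpNorm v (pStar n s) volume < ⊤ := by
    rw [eLpNorm_lt_top_iff_lintegral_rpow_enorm_lt_top hp0 hpt]
    calc (∫⁻ x, (‖v x‖₊ : ℝ≥0∞) ^ (pStar n s).toReal ∂volume)
        = ∫⁻ x in Hplus n ∪ Hminus n, (‖v x‖₊ : ℝ≥0∞) ^ (pStar n s).toReal ∂volume := by
          rw [hS]
      _ ≤ (∫⁻ x in Hplus n, (‖v x‖₊ : ℝ≥0∞) ^ (pStar n s).toReal ∂volume)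
          + ∫⁻ x in Hminus n, (‖v x‖₊ : ℝ≥0∞) ^ (pStar n s).toReal ∂volume :=
          lintegral_union_le _ _ _
      _ < ⊤ := by
          rw [hIvA, hIvB]
          exact ENNReal.add_lt_top.mpr ⟨hIu, hIu⟩
  -- the energy integrands
  set F : Rn n × Rn n → ℝ≥0∞ := fun q =>
    ENNReal.ofReal ((v q.1 - v q.2) ^ 2 / ‖q.1 - q.2‖ ^ ((n : ℝ) + 2 * s)) with hFdef
  set H : Rn n × Rn n → ℝ≥0∞ := fun q =>
    ENNReal.ofReal ((u q.1 - u q.2) ^ 2 / ‖q.1 - q.2‖ ^ ((n : ℝ) + 2 * s)) with hHdef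
  set J := ∫⁻ q in (Hplus n) ×ˢ (Hplus n), H q with hJdef
  have hprodS : (volume : Measure (Rn n × Rn n)).restrict
      ((Hplus n ∪ Hminus n) ×ˢ (Hplus n ∪ Hminus n)) = volume := by
    rw [show (volume : Measure (Rn n × Rn n)) =
        Measure.prod volume volume from Measure.volume_eq_prod _ _]
    rw [← Measure.prod_restrict, hS]
  -- useful facts about v on the reflected points
  have hvR : ∀ y : Rn n, y ∈ Hplus n → v (R0 n y) = u y := by
    intro y hy
    have h1 : ¬ 0 < (R0 n y) 0 := by rw [R0_apply_zero]; simp [Hplus] at hy; linarith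
    show (if 0 < (R0 n y) 0 then u (R0 n y) else u (R0 n (R0 n y))) = u y
    rw [if_neg h1, R0_invol]
  have hnormR : ∀ x y : Rn n, ‖R0 n x - y‖ = ‖x - R0 n y‖ := by
    intro x y
    rw [← (R0 n).norm_map (x - R0 n y), map_sub, R0_invol]
  have hnormRR : ∀ x y : Rn n, ‖R0 n x - R0 n y‖ = ‖x - y‖ := by
    intro x y
    rw [← map_sub, (R0 n).norm_map]
  have hFH : ∀ x y : Rn n, x ∈ Hplus n → y ∈ Hplus n →
      ENNReal.ofReal ((u x - u y) ^ 2 / ‖x - R0 n y‖ ^ ((n : ℝ) + 2 * s)) ≤ H (x, y) := by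
    intro x y hx hy
    rw [hHdef]
    apply ENNReal.ofReal_le_ofReal
    rcases eq_or_lt_of_le (norm_nonneg (x - y)) with h0 | h0
    · have hxy : x = y := by
        rw [eq_comm, norm_eq_zero, sub_eq_zero] at h0; exact h0
      subst hxy
      simp [sub_self]
    · have hle : ‖x - y‖ ≤ ‖x - R0 n y‖ := norm_sub_le_reflect hx hy
      have hd1 : (0 : ℝ) < ‖x - y‖ ^ ((n : ℝ) + 2 * s) := Real.rpow_pos_of_pos h0 _
      have hd2 : ‖x - y‖ ^ ((n : ℝ) + 2 * s) ≤ ‖x - R0 n y‖ ^ ((n : ℝ) + 2 * s) :=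
        Real.rpow_le_rpow (norm_nonneg _) hle (by linarith)
      exact div_le_div_of_nonneg_left (sq_nonneg _) hd1 hd2
  -- the four pieces
  have hAA : (∫⁻ q in (Hplus n) ×ˢ (Hplus n), F q) = J := by
    rw [hJdef]
    apply setLIntegral_congr_fun (hA.prod hA)
    rintro ⟨x, y⟩ hq
    obtain ⟨hx, hy⟩ := hq
    rw [hFdef, hHdef]
    simp only
    rw [vA x hx, vA y hy]
  have hBB : (∫⁻ q in (Hminus n) ×ˢ (Hminus n), F q) = J := by
    have mp2 : MeasurePreserving (Prod.map (R0 n) (R0 n))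
        (volume : Measure (Rn n × Rn n)) volume := by
      rw [show (volume : Measure (Rn n × Rn n)) =
          Measure.prod volume volume from Measure.volume_eq_prod _ _]
      exact mpR.prod mpR
    have emb2 : MeasurableEmbedding (Prod.map (R0 n) (R0 n)) := embR.prodMap embR
    have hpre : (Prod.map (R0 n) (R0 n)) ⁻¹' ((Hminus n) ×ˢ (Hminus n)) =
        (Hplus n) ×ˢ (Hplus n) := by
      ext q
      simp [Hplus, Hminus, Prod.map, R0_apply_zero, Set.mem_prod]
    have h1 := mp2.setLIntegral_comp_preimage_emb emb2 F ((Hminus n) ×ˢ (Hminus n))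
    rw [hpre] at h1
    rw [← h1, hJdef]
    apply setLIntegral_congr_fun (hA.prod hA)
    rintro ⟨x, y⟩ hq
    obtain ⟨hx, hy⟩ := hq
    rw [hFdef, hHdef]
    simp only [Prod.map]
    rw [hvR x hx, hvR y hy, hnormRR]
  have hAB : (∫⁻ q in (Hplus n) ×ˢ (Hminus n), F q) ≤ J := by
    have mp2 : MeasurePreserving (Prod.map (id : Rn n → Rn n) (R0 n))
        (volume : Measure (Rn n × Rn n)) volume := by
      rw [show (volume : Measure (Rn n × Rn n)) =
          Measure.prod volume volume from Measure.volume_eq_prod _ _]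
      exact (MeasurePreserving.id _).prod mpR
    have emb2 : MeasurableEmbedding (Prod.map (id : Rn n → Rn n) (R0 n)) :=
      MeasurableEmbedding.id.prodMap embR
    have hpre : (Prod.map (id : Rn n → Rn n) (R0 n)) ⁻¹' ((Hplus n) ×ˢ (Hminus n)) =
        (Hplus n) ×ˢ (Hplus n) := by
      ext q
      simp [Hplus, Hminus, Prod.map, R0_apply_zero, Set.mem_prod]
    have h1 := mp2.setLIntegral_comp_preimage_emb emb2 F ((Hplus n) ×ˢ (Hminus n))
    rw [hpre] at h1
    rw [← h1, hJdef]
    apply setLIntegral_mono' (hA.prod hA)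
    rintro ⟨x, y⟩ hq
    obtain ⟨hx, hy⟩ := hq
    have : F (Prod.map (id : Rn n → Rn n) (R0 n) (x, y)) =
        ENNReal.ofReal ((u x - u y) ^ 2 / ‖x - R0 n y‖ ^ ((n : ℝ) + 2 * s)) := by
      rw [hFdef]
      simp only [Prod.map, id]
      rw [vA x hx, hvR y hy]
    rw [this]
    exact hFH x y hx hy
  have hBA : (∫⁻ q in (Hminus n) ×ˢ (Hplus n), F q) ≤ J := by
    have mp2 : MeasurePreserving (Prod.map (R0 n) (id : Rn n → Rn n))
        (volume : Measure (Rn n × Rn n)) volume := by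
      rw [show (volume : Measure (Rn n × Rn n)) =
          Measure.prod volume volume from Measure.volume_eq_prod _ _]
      exact mpR.prod (MeasurePreserving.id _)
    have emb2 : MeasurableEmbedding (Prod.map (R0 n) (id : Rn n → Rn n)) :=
      embR.prodMap MeasurableEmbedding.id
    have hpre : (Prod.map (R0 n) (id : Rn n → Rn n)) ⁻¹' ((Hminus n) ×ˢ (Hplus n)) =
        (Hplus n) ×ˢ (Hplus n) := by
      ext q
      simp [Hplus, Hminus, Prod.map, R0_apply_zero, Set.mem_prod]
    have h1 := mp2.setLIntegral_comp_preimage_emb emb2 F ((Hminus n) ×ˢ (Hplus n))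
    rw [hpre] at h1
    rw [← h1, hJdef]
    apply setLIntegral_mono' (hA.prod hA)
    rintro ⟨x, y⟩ hq
    obtain ⟨hx, hy⟩ := hq
    have : F (Prod.map (R0 n) (id : Rn n → Rn n) (x, y)) =
        ENNReal.ofReal ((u y - u x) ^ 2 / ‖x - R0 n y‖ ^ ((n : ℝ) + 2 * s)) := by
      rw [hFdef]
      simp only [Prod.map, id]
      rw [hvR x hx, vA y hy, hnormR]
      congr 1
      ring
    rw [this]
    have h2 : ENNReal.ofReal ((u y - u x) ^ 2 / ‖x - R0 n y‖ ^ ((n : ℝ) + 2 * s)) =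
        ENNReal.ofReal ((u x - u y) ^ 2 / ‖x - R0 n y‖ ^ ((n : ℝ) + 2 * s)) := by
      congr 1
      ring
    rw [h2]
    exact hFH x y hx hy
  -- combining: the total energy of v is at most 4 J (times the constant)
  have hsplit : (∫⁻ q, F q ∂(volume : Measure (Rn n × Rn n))) ≤ 4 * J := by
    have hset : (Hplus n ∪ Hminus n) ×ˢ (Hplus n ∪ Hminus n) =
        (((Hplus n) ×ˢ (Hplus n)) ∪ ((Hplus n) ×ˢ (Hminus n))) ∪
          (((Hminus n) ×ˢ (Hplus n)) ∪ ((Hminus n) ×ˢ (Hminus n))) := by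
      rw [Set.union_prod, Set.prod_union, Set.prod_union]
    calc (∫⁻ q, F q ∂(volume : Measure (Rn n × Rn n)))
        = ∫⁻ q in (Hplus n ∪ Hminus n) ×ˢ (Hplus n ∪ Hminus n), F q := by rw [hprodS]
      _ ≤ ((∫⁻ q in (Hplus n) ×ˢ (Hplus n), F q) + ∫⁻ q in (Hplus n) ×ˢ (Hminus n), F q)
          + ((∫⁻ q in (Hminus n) ×ˢ (Hplus n), F q)
            + ∫⁻ q in (Hminus n) ×ˢ (Hminus n), F q) := by
          rw [hset]
          exact le_trans (lintegral_union_le _ _ _)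
            (add_le_add (lintegral_union_le _ _ _) (lintegral_union_le _ _ _))
      _ ≤ (J + J) + (J + J) := by
          exact add_le_add (add_le_add hAA.le hAB) (add_le_add hBA hBB.le)
      _ = 4 * J := by ring
  have hEs_v : Es n s v Set.univ =
      ENNReal.ofReal (Cns n s / 2) * ∫⁻ q, F q ∂(volume : Measure (Rn n × Rn n)) := by
    simp only [Es, Measure.restrict_univ]
    rfl
  have hEs_u : Es n s u ((Hplus n) ×ˢ (Hplus n)) = ENNReal.ofReal (Cns n s / 2) * J := by
    simp only [Es, hJdef]
    rfl
  have hEsle : Es n s v Set.univ ≤ 4 * Es n s u ((Hplus n) ×ˢ (Hplus n)) := by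
    rw [hEs_v, hEs_u]
    calc ENNReal.ofReal (Cns n s / 2) * ∫⁻ q, F q ∂(volume : Measure (Rn n × Rn n))
        ≤ ENNReal.ofReal (Cns n s / 2) * (4 * J) := mul_le_mul_right hsplit _
      _ = 4 * (ENNReal.ofReal (Cns n s / 2) * J) := by ring
  have hvE : Es n s v Set.univ < ⊤ :=
    lt_of_le_of_lt hEsle (ENNReal.mul_lt_top (by norm_num) hE)
  -- conclusion
  by_cases hu0 : u =ᵐ[volume.restrict (Hplus n)] 0
  · have : eLpNorm u (pStar n s) (volume.restrict (Hplus n)) = 0 := by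
      rw [eLpNorm_congr_ae hu0, eLpNorm_zero]
    rw [this]
    simp
  · have huv : u =ᵐ[volume.restrict (Hplus n)] v :=
      (ae_restrict_iff' hA).mpr (ae_of_all _ fun x hx => (vA x hx).symm)
    have hvne : ¬ v =ᵐ[volume] 0 := by
      intro h
      exact hu0 (huv.trans (h.filter_mono (ae_mono Measure.restrict_le_self)))
    set N := eLpNorm v (pStar n s) volume with hNdef
    have hmem : Es n s v Set.univ / N ^ 2 ∈
        { r : ℝ≥0∞ | ∃ w : Rn n → ℝ, Measurable w ∧
          eLpNorm w (pStar n s) volume < ⊤ ∧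
          Es n s w Set.univ < ⊤ ∧
          ¬ (w =ᵐ[volume] 0) ∧
          r = Es n s w Set.univ / (eLpNorm w (pStar n s) volume) ^ 2 } :=
      ⟨v, hv, hvLp, hvE, hvne, rfl⟩
    have hSle : Ss n s ≤ Es n s v Set.univ / N ^ 2 := sInf_le hmem
    have hN0 : N ≠ 0 := by
      intro h
      exact hvne ((eLpNorm_eq_zero_iff hv.aestronglyMeasurable hp0).mp h)
    have hN20 : N ^ 2 ≠ 0 := pow_ne_zero _ hN0
    have hN2t : N ^ 2 ≠ ⊤ := by
      exact (ENNReal.pow_lt_top hvLp).ne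
    have hkey : Ss n s * N ^ 2 ≤ Es n s v Set.univ := by
      calc Ss n s * N ^ 2 ≤ (Es n s v Set.univ / N ^ 2) * N ^ 2 :=
            mul_le_mul_left hSle _
        _ = Es n s v Set.univ := ENNReal.div_mul_cancel hN20 hN2t
    have hMN : eLpNorm u (pStar n s) (volume.restrict (Hplus n)) ≤ N := by
      rw [eLpNorm_congr_ae huv]
      exact eLpNorm_mono_measure _ Measure.restrict_le_self
    have h4 : Ss n s * (eLpNorm u (pStar n s) (volume.restrict (Hplus n))) ^ 2 ≤
        4 * Es n s u ((Hplus n) ×ˢ (Hplus n)) := by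
      calc Ss n s * (eLpNorm u (pStar n s) (volume.restrict (Hplus n))) ^ 2
          ≤ Ss n s * N ^ 2 := mul_le_mul_right (pow_le_pow_left' hMN 2) _
        _ ≤ Es n s v Set.univ := hkey
        _ ≤ 4 * Es n s u ((Hplus n) ×ˢ (Hplus n)) := hEsle
    calc (1 / 4 : ℝ≥0∞) * Ss n s *
          (eLpNorm u (pStar n s) (volume.restrict (Hplus n))) ^ 2
        = (1 / 4 : ℝ≥0∞) * (Ss n s *
            (eLpNorm u (pStar n s) (volume.restrict (Hplus n))) ^ 2) := by ring
      _ ≤ (1 / 4 : ℝ≥0∞) * (4 * Es n s u ((Hplus n) ×ˢ (Hplus n))) :=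
            mul_le_mul_right h4 _
      _ = Es n s u ((Hplus n) ×ˢ (Hplus n)) := by
          rw [← mul_assoc, one_div, ENNReal.inv_mul_cancel (by norm_num) (by norm_num),
            one_mul]
end
end

section
/- Let E ⊆ ℝ^n_+ be a bounded measurable set of positive Lebesgue measure. Then 𝒫_s χ_E does not belong to L¹(ℝ^n_-); that is, ∫_{ℝ^n_-} (𝒫_s χ_E)(x) dx = +∞. -/
open MeasureTheory Set Filter Topology
open scoped ENNReal

noncomputable section

/-- The extension operator `𝒫_s`, defined on `ℝ^n_-` by
`(𝒫_s u)(x) = (C_{n,s}/γ_s)·|x₁|^{2s}·∫_{ℝ^n_+} u(y)·|x−y|^{−(n+2s)} dy`. -/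
def PsMinus (n : ℕ) [NeZero n] (s : ℝ) (u : Rn n → ℝ) (x : Rn n) : ℝ :=
  (Cns n s / gammaS s) * |x 0| ^ (2 * s) *
    ∫ y in Hplus n, u y / ‖x - y‖ ^ ((n : ℝ) + 2 * s)

lemma abs_coord_le_norm {n : ℕ} (z : Rn n) (i : Fin n) : |z i| ≤ ‖z‖ := by
  rw [EuclideanSpace.norm_eq, ← Real.sqrt_sq_eq_abs]
  apply Real.sqrt_le_sqrt
  have := Finset.single_le_sum (f := fun j => ‖z j‖ ^ 2) (fun j _ => sq_nonneg _)
    (Finset.mem_univ i)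
  simpa [Real.norm_eq_abs, sq_abs] using this

lemma norm_le_of_coords {n : ℕ} (z : Rn n) (M : ℝ) (hM : 0 ≤ M)
    (h : ∀ i, |z i| ≤ M) : ‖z‖ ≤ Real.sqrt n * M := by
  rw [EuclideanSpace.norm_eq]
  have h1 : ∑ i, ‖z i‖ ^ 2 ≤ (n : ℝ) * M ^ 2 := by
    calc ∑ i, ‖z i‖ ^ 2 ≤ ∑ _i : Fin n, M ^ 2 :=
          Finset.sum_le_sum fun i _ => by
            rw [Real.norm_eq_abs]
            exact pow_le_pow_left₀ (abs_nonneg _) (h i) 2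
      _ = (n : ℝ) * M ^ 2 := by simp [Finset.sum_const, mul_comm]
  calc Real.sqrt (∑ i, ‖z i‖ ^ 2) ≤ Real.sqrt ((n : ℝ) * M ^ 2) := Real.sqrt_le_sqrt h1
    _ = Real.sqrt n * M := by
        rw [Real.sqrt_mul (by positivity), Real.sqrt_sq hM]

/-- If `E ⊆ ℝ^n_+` is bounded, measurable and of positive measure,
then `𝒫_s χ_E ∉ L¹(ℝ^n_-)`. -/
theorem PsMinus_indicator_not_L1 (n : ℕ) [NeZero n] (s : ℝ) (hs : s ∈ Set.Ioo (0 : ℝ) 1)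
    (E : Set (Rn n)) (hEm : MeasurableSet E) (hEsub : E ⊆ Hplus n)
    (hEb : Bornology.IsBounded E) (hEpos : 0 < volume E) :
    ∫⁻ x in Hminus n,
        ENNReal.ofReal (PsMinus n s (E.indicator fun _ => (1 : ℝ)) x) = ⊤ := by
  obtain ⟨hs0, hs1⟩ := hs
  have hn1 : (1 : ℝ) ≤ (n : ℝ) := by
    exact_mod_cast Nat.one_le_iff_ne_zero.mpr (NeZero.ne n)
  set p : ℝ := (n : ℝ) + 2 * s with hp_def
  have hp : 0 < p := by simp only [hp_def]; linarith
  -- positivity of the constant K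
  have hG1 : 0 < Real.Gamma (1 - s) := Real.Gamma_pos_of_pos (by linarith)
  have hK : 0 < Cns n s / gammaS s := by
    apply div_pos
    · unfold Cns
      apply div_pos
      · exact mul_pos (mul_pos hs0 (Real.rpow_pos_of_pos two_pos _))
          (Real.Gamma_pos_of_pos (by positivity))
      · exact mul_pos (Real.rpow_pos_of_pos Real.pi_pos _) hG1
    · unfold gammaS
      apply div_pos
      · exact mul_pos (Real.rpow_pos_of_pos two_pos _)
          (Real.Gamma_pos_of_pos (by positivity))
      · exact mul_pos (Real.sqrt_pos.mpr Real.pi_pos) hG1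
  set K : ℝ := Cns n s / gammaS s with hK_def
  -- radius bound
  obtain ⟨R0, hR0⟩ := hEb.subset_closedBall 0
  set R : ℝ := max R0 1 with hR_def
  have hR1 : (1 : ℝ) ≤ R := le_max_right _ _
  have hR : 0 < R := lt_of_lt_of_le one_pos hR1
  have hER : E ⊆ Metric.closedBall 0 R :=
    hR0.trans (Metric.closedBall_subset_closedBall (le_max_left _ _))
  have hEfin : volume E ≠ ⊤ := hEb.measure_lt_top.ne
  set V : ℝ := (volume E).toReal with hV_def
  have hV : 0 < V := ENNReal.toReal_pos hEpos.ne' hEfin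
  set D : ℝ := 2 * Real.sqrt n + R with hD_def
  have hD : 0 < D := by positivity
  -- the boxes
  set S : ℕ → Set (Rn n) := fun k =>
    (MeasurableEquiv.toLp 2 (Fin n → ℝ)).symm ⁻¹'
      (Set.univ.pi fun _ : Fin n => Set.Ioo (-(2 * (2 : ℝ) ^ k)) (-((2 : ℝ) ^ k))) with hS_def
  have hmemS : ∀ k (x : Rn n), x ∈ S k ↔ ∀ i, x i ∈ Set.Ioo (-(2 * (2 : ℝ) ^ k)) (-((2 : ℝ) ^ k)) := by
    intro k x
    simp [hS_def, Set.mem_pi]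
  have hSmeas : ∀ k, MeasurableSet (S k) :=
    fun k => (MeasurableEquiv.toLp 2 (Fin n → ℝ)).symm.measurable
      (MeasurableSet.univ_pi fun _ => measurableSet_Ioo)
  have hSvol : ∀ k, volume (S k) = ENNReal.ofReal ((2 : ℝ) ^ k) ^ n := by
    intro k
    rw [hS_def]
    rw [(EuclideanSpace.volume_preserving_symm_measurableEquiv_toLp (Fin n)).measure_preimage
      (MeasurableSet.univ_pi fun _ => measurableSet_Ioo).nullMeasurableSet]
    rw [volume_pi_pi]
    have : -((2 : ℝ) ^ k) - -(2 * (2 : ℝ) ^ k) = (2 : ℝ) ^ k := by ring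
    simp [Real.volume_Ioo, this]
  have hSsubH : ∀ k, S k ⊆ Hminus n := by
    intro k x hx
    have := ((hmemS k x).1 hx 0).2
    have h2 : (0 : ℝ) < 2 ^ k := by positivity
    exact lt_trans this (by linarith)
  -- disjointness
  have hSdisj : Pairwise (Function.onFun Disjoint S) := by
    intro k l hkl
    rw [Function.onFun, Set.disjoint_left]
    intro x hxk hxl
    have h1 := (hmemS k x).1 hxk 0
    have h2 := (hmemS l x).1 hxl 0
    rcases hkl.lt_or_gt with h | h
    · have : (2 : ℝ) ^ (k + 1) ≤ 2 ^ l := pow_le_pow_right₀ one_le_two h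
      rw [pow_succ] at this
      have := h2.2
      have := h1.1
      nlinarith [h1.1, h2.2]
    · have : (2 : ℝ) ^ (l + 1) ≤ 2 ^ k := pow_le_pow_right₀ one_le_two h
      rw [pow_succ] at this
      nlinarith [h2.1, h1.2]
  -- per-box lower bound constant
  set c : ℝ := K * V / D ^ p with hc_def
  have hc : 0 < c := by
    apply div_pos (mul_pos hK hV) (Real.rpow_pos_of_pos hD _)
  -- key pointwise estimate
  have hkey : ∀ k, ENNReal.ofReal c ≤
      ∫⁻ x in S k, ENNReal.ofReal (PsMinus n s (E.indicator fun _ => (1 : ℝ)) x) := by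
    intro k
    set t : ℝ := (2 : ℝ) ^ k with ht_def
    have ht : 0 < t := by positivity
    have ht1 : 1 ≤ t := one_le_pow₀ one_le_two
    set ck : ℝ := K * t ^ (2 * s) * (((D * t) ^ p)⁻¹ * V) with hck_def
    have hDt : 0 < D * t := mul_pos hD ht
    have hck_nonneg : 0 ≤ ck := by
      have := Real.rpow_pos_of_pos ht (2 * s)
      have := Real.rpow_pos_of_pos hDt p
      positivity
    -- pointwise bound on S k
    have hpoint : ∀ x ∈ S k, ck ≤ PsMinus n s (E.indicator fun _ => (1 : ℝ)) x := by
      intro x hx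
      have hxc := (hmemS k x).1 hx
      have hx0 : x 0 < -t := (hxc 0).2
      have hx0' : t ≤ |x 0| := by
        rw [abs_of_neg (by linarith)]; linarith
      have hxnorm : ‖x‖ ≤ Real.sqrt n * (2 * t) := by
        apply norm_le_of_coords _ _ (by positivity)
        intro i
        have h1 := (hxc i).1
        have h2 := (hxc i).2
        rw [abs_le]; constructor <;> nlinarith
      -- the inner integral
      have hinner : ((D * t) ^ p)⁻¹ * V ≤
          ∫ y in Hplus n, (E.indicator fun _ => (1 : ℝ)) y / ‖x - y‖ ^ p := by
        have heq : (fun y : Rn n => (E.indicator fun _ => (1 : ℝ)) y / ‖x - y‖ ^ p)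
            = fun y => E.indicator (fun y => 1 / ‖x - y‖ ^ p) y := by
          funext y
          by_cases hy : y ∈ E <;> simp [Set.indicator, hy]
        rw [heq, setIntegral_indicator hEm, Set.inter_eq_right.mpr hEsub]
        -- bounds on ‖x - y‖ for y ∈ E
        have hxy_lb : ∀ y ∈ E, t ≤ ‖x - y‖ := by
          intro y hy
          have hy0 : 0 < y 0 := hEsub hy
          have := abs_coord_le_norm (x - y) 0
          have hsub : (x - y) 0 = x 0 - y 0 := rfl
          rw [hsub, abs_of_neg (by linarith)] at this
          linarith
        have hxy_ub : ∀ y ∈ E, ‖x - y‖ ≤ D * t := by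
          intro y hy
          have hyR : ‖y‖ ≤ R := by
            have := hER hy
            simpa [Metric.mem_closedBall, dist_eq_norm] using this
          calc ‖x - y‖ ≤ ‖x‖ + ‖y‖ := norm_sub_le _ _
            _ ≤ Real.sqrt n * (2 * t) + R * t := by
                have : R ≤ R * t := le_mul_of_one_le_right hR.le ht1
                linarith
            _ = D * t := by rw [hD_def]; ring
        -- integrability
        have hmg : Measurable fun y : Rn n => 1 / ‖x - y‖ ^ p := by
          simp only [one_div]
          exact ((measurable_const.sub measurable_id).norm.pow measurable_const).inv
        have hint : IntegrableOn (fun y : Rn n => 1 / ‖x - y‖ ^ p) E volume := by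
          apply Measure.integrableOn_of_bounded hEfin
            hmg.aestronglyMeasurable (M := (t ^ p)⁻¹)
          rw [ae_restrict_iff' hEm]
          apply ae_of_all
          intro y hy
          have h1 := hxy_lb y hy
          have h2 : t ^ p ≤ ‖x - y‖ ^ p := Real.rpow_le_rpow ht.le h1 hp.le
          have h3 : 0 < t ^ p := Real.rpow_pos_of_pos ht p
          rw [Real.norm_eq_abs, abs_of_nonneg (by positivity)]
          rw [one_div]
          exact inv_anti₀ h3 h2
        have hconst : ∀ y ∈ E, ((D * t) ^ p)⁻¹ ≤ 1 / ‖x - y‖ ^ p := by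
          intro y hy
          have h1 := hxy_lb y hy
          have h2 := hxy_ub y hy
          have hxy0 : 0 < ‖x - y‖ := lt_of_lt_of_le ht h1
          have h3 : ‖x - y‖ ^ p ≤ (D * t) ^ p := Real.rpow_le_rpow hxy0.le h2 hp.le
          have h4 : 0 < ‖x - y‖ ^ p := Real.rpow_pos_of_pos hxy0 p
          rw [one_div]
          exact inv_anti₀ h4 h3
        have := setIntegral_ge_of_const_le_real hEm hEfin hconst hint
        exact this
      -- assemble
      have hinner_nonneg : 0 ≤ ((D * t) ^ p)⁻¹ * V := by
        have := Real.rpow_pos_of_pos hDt p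
        positivity
      have h2s : t ^ (2 * s) ≤ |x 0| ^ (2 * s) :=
        Real.rpow_le_rpow ht.le hx0' (by positivity)
      unfold PsMinus
      rw [hck_def]
      apply mul_le_mul _ hinner hinner_nonneg
      · have := Real.rpow_pos_of_pos ht (2 * s)
        positivity
      · exact mul_le_mul_of_nonneg_left h2s hK.le
    -- integrate the bound
    have hle : ENNReal.ofReal ck * volume (S k) ≤
        ∫⁻ x in S k, ENNReal.ofReal (PsMinus n s (E.indicator fun _ => (1 : ℝ)) x) := by
      rw [← setLIntegral_const (S k) (ENNReal.ofReal ck)]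
      apply setLIntegral_mono' (hSmeas k)
      intro x hx
      exact ENNReal.ofReal_le_ofReal (hpoint x hx)
    refine le_trans (le_of_eq ?_) hle
    rw [hSvol k, ← ENNReal.ofReal_pow ht.le, ← ENNReal.ofReal_mul hck_nonneg]
    congr 1
    -- ck * t ^ n = c
    have htp : (0 : ℝ) < t ^ p := Real.rpow_pos_of_pos ht p
    have hDp : (0 : ℝ) < D ^ p := Real.rpow_pos_of_pos hD p
    have e1 : t ^ (2 * s) * (t ^ p)⁻¹ * t ^ ((n : ℕ) : ℝ) = 1 := by
      rw [← Real.rpow_neg ht.le, ← Real.rpow_add ht, ← Real.rpow_add ht]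
      have : 2 * s + -p + ((n : ℕ) : ℝ) = 0 := by rw [hp_def]; ring
      rw [this, Real.rpow_zero]
    have e2 : (t : ℝ) ^ (n : ℕ) = t ^ ((n : ℕ) : ℝ) := (Real.rpow_natCast t n).symm
    rw [hck_def, hc_def, Real.mul_rpow hD.le ht.le, mul_inv, e2, div_eq_mul_inv]
    linear_combination -(K * V * (D ^ p)⁻¹) * e1
  -- sum over boxes
  have hsum : (⊤ : ℝ≥0∞) ≤
      ∫⁻ x in ⋃ k, S k, ENNReal.ofReal (PsMinus n s (E.indicator fun _ => (1 : ℝ)) x) := by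
    rw [lintegral_iUnion hSmeas hSdisj]
    calc (⊤ : ℝ≥0∞) = ∑' _ : ℕ, ENNReal.ofReal c :=
          (ENNReal.tsum_const_eq_top_of_ne_zero (by
            simp [ENNReal.ofReal_eq_zero, not_le, hc])).symm
      _ ≤ _ := ENNReal.tsum_le_tsum hkey
  have hUnion : (⋃ k, S k) ⊆ Hminus n := Set.iUnion_subset hSsubH
  exact top_le_iff.mp (le_trans hsum (lintegral_mono_set hUnion))
end
end
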